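/- Let P be a probability measure on a measurable space 𝒳, M > 0, c > 0, q ≥ 1, H > 0, ε ≥ 0, t ∈ (0,1), γ ∈ (0,1), and let V ≥ 1 be an integer with V < 1/(2γ). Set I_j = [(j−1)/V, j/V] and A_j = (2j−1)/(2V). Let μ : 𝒳 × [0,1] → ℝ be measurable with |μ(x,A)| ≤ M and |μ(x,A) − μ(x,Ã)| ≤ M|A − Ã| for all x, A, Ã, and let A* : 𝒳 → [0,1] be measurable with μ(x, A*(x)) = max_{A∈[0,1]} μ(x,A) for all x. Let e : 𝒳 × [0,1] → ℝ be measurable with e(x,A) ≥ η > 0 and A ↦ e(x,A) integrable, and define μ_{I_j}(x) = (∫_{I_j} μ(x,A) e(x,A) dA)/(∫_{I_j} e(x,A) dA). Assume the continuous noise condition P({x : ∃ A ∈ [0,1] with |A − A*(x)| ≥ γ and μ(x,A*(x)) − μ(x,A) ≤ M t}) ≤ c t^q (1 − γ). Let μ̃_{I_1},…,μ̃_{I_V} : 𝒳 → ℝ be measurable with sup_x |μ̃_{I_j}(x) − μ_{I_j}(x)| ≤ ε for all j, and define π̃(x) = Softmax_H(μ̃_{I_1}(x),…,μ̃_{I_V}(x)).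 Then ∫_𝒳 [ μ(x, A*(x)) − Σ_{j=1}^V μ_{I_j}(x) π̃_j(x) ] dP(x) ≤ M/V + 2 c M t^q (1 − γ) + M V² exp(−(M t − 3M/V − 2ε)/H). (The bias bound (I₃) in the proof of Theorem 3.) -/

import Mathlib

open MeasureTheory

section Aux

open Set

private lemma wavg_bounds17 {a b η lo hi : ℝ} (hη : 0 < η) (hab : a < b)
    {g eF : ℝ → ℝ}
    (hge : IntegrableOn (fun A => g A * eF A) (Icc a b))
    (hee : IntegrableOn eF (Icc a b))
    (heη : ∀ A ∈ Icc a b, η ≤ eF A)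
    (hlo : ∀ A ∈ Icc a b, lo ≤ g A) (hhi : ∀ A ∈ Icc a b, g A ≤ hi) :
    lo ≤ (∫ A in Icc a b, g A * eF A) / (∫ A in Icc a b, eF A) ∧
      (∫ A in Icc a b, g A * eF A) / (∫ A in Icc a b, eF A) ≤ hi := by
  have hvol : (volume (Icc a b)).toReal = b - a := by
    rw [Real.volume_Icc, ENNReal.toReal_ofReal (by linarith)]
  have hconst : ∀ c : ℝ, IntegrableOn (fun _ : ℝ => c) (Icc a b) := by
    intro c
    exact integrableOn_const (by rw [Real.volume_Icc]; exact ENNReal.ofReal_ne_top)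
  have hD : 0 < ∫ A in Icc a b, eF A := by
    have h2 : ∫ _ in Icc a b, η ≤ ∫ A in Icc a b, eF A :=
      setIntegral_mono_on (hconst η) hee measurableSet_Icc heη
    rw [setIntegral_const, measureReal_def, hvol, smul_eq_mul] at h2
    nlinarith
  have he0 : ∀ A ∈ Icc a b, 0 ≤ eF A := fun A hA => le_trans hη.le (heη A hA)
  constructor
  · rw [le_div_iff₀ hD]
    have h1 : ∫ A in Icc a b, lo * eF A ≤ ∫ A in Icc a b, g A * eF A :=
      setIntegral_mono_on (hee.const_mul lo) hge measurableSet_Icc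
        (fun A hA => mul_le_mul_of_nonneg_right (hlo A hA) (he0 A hA))
    rwa [integral_const_mul] at h1
  · rw [div_le_iff₀ hD]
    have h1 : ∫ A in Icc a b, g A * eF A ≤ ∫ A in Icc a b, hi * eF A :=
      setIntegral_mono_on hge (hee.const_mul hi) measurableSet_Icc
        (fun A hA => mul_le_mul_of_nonneg_right (hhi A hA) (he0 A hA))
    rwa [integral_const_mul] at h1

end Aux

set_option maxHeartbeats 2000000 in
/-- The bias bound `(I₃)` in the proof of Theorem 3 (continuous actions): the action space
`[0,1]` is partitioned into `V` sub-intervals `I_j` (indexed by `j : Fin V`, with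
`I_j = [j/V, (j+1)/V]`), `μ_{I_j}(x)` is the `e`-weighted average of `μ(x,·)` over `I_j`, and
`π̃` is the temperature-`H` softmax policy built from `ε`-accurate estimates `μ̃_{I_j}` of
`μ_{I_j}`. Under the continuous noise condition, the discretized regret of `π̃` against the
deterministic optimal policy `A*` is at most
`M/V + 2cM t^q (1−γ) + M V² exp(−(Mt − 3M/V − 2ε)/H)`. -/
theorem stmt_17
    {𝒳 : Type*} [MeasurableSpace 𝒳]
    (P : Measure 𝒳) [IsProbabilityMeasure P]
    (M c q H ε t γ η : ℝ)
    (hM : 0 < M) (hc : 0 < c) (hq : 1 ≤ q) (hH : 0 < H) (hε : 0 ≤ ε)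
    (ht : t ∈ Set.Ioo (0:ℝ) 1) (hγ : γ ∈ Set.Ioo (0:ℝ) 1) (hη : 0 < η)
    (V : ℕ) (hV : 1 ≤ V) (hVγ : (V : ℝ) < 1 / (2 * γ))
    (μ : 𝒳 → ℝ → ℝ)
    (hμmeas : Measurable (fun p : 𝒳 × ℝ => μ p.1 p.2))
    (hμbdd : ∀ x, ∀ A ∈ Set.Icc (0:ℝ) 1, |μ x A| ≤ M)
    (hμlip : ∀ x, ∀ A ∈ Set.Icc (0:ℝ) 1, ∀ A' ∈ Set.Icc (0:ℝ) 1,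
      |μ x A - μ x A'| ≤ M * |A - A'|)
    (Astar : 𝒳 → ℝ) (hAmeas : Measurable Astar)
    (hAmem : ∀ x, Astar x ∈ Set.Icc (0:ℝ) 1)
    (hAmax : ∀ x, ∀ A ∈ Set.Icc (0:ℝ) 1, μ x A ≤ μ x (Astar x))
    (e : 𝒳 → ℝ → ℝ)
    (hemeas : Measurable (fun p : 𝒳 × ℝ => e p.1 p.2))
    (he : ∀ x, ∀ A ∈ Set.Icc (0:ℝ) 1, η ≤ e x A)
    (heint : ∀ x, IntegrableOn (e x) (Set.Icc (0:ℝ) 1))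
    (μI : Fin V → 𝒳 → ℝ)
    (hμI : ∀ j x, μI j x =
      (∫ A in Set.Icc (((j : ℕ) : ℝ) / V) ((((j : ℕ) : ℝ) + 1) / V), μ x A * e x A) /
      (∫ A in Set.Icc (((j : ℕ) : ℝ) / V) ((((j : ℕ) : ℝ) + 1) / V), e x A))
    (hnoise : P {x | ∃ A ∈ Set.Icc (0:ℝ) 1,
        γ ≤ |A - Astar x| ∧ μ x (Astar x) - μ x A ≤ M * t} ≤
      ENNReal.ofReal (c * t ^ q * (1 - γ)))
    (μIt : Fin V → 𝒳 → ℝ) (hμItmeas : ∀ j, Measurable (μIt j))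
    (hμIt : ∀ j x, |μIt j x - μI j x| ≤ ε)
    (πt : 𝒳 → Fin V → ℝ)
    (hπt : ∀ x j, πt x j = Real.exp (μIt j x / H) / ∑ k, Real.exp (μIt k x / H)) :
    (∫ x, (μ x (Astar x) - ∑ j, μI j x * πt x j) ∂P) ≤
      M / V + 2 * c * M * t ^ q * (1 - γ) +
        M * V ^ 2 * Real.exp (-(M * t - 3 * M / V - 2 * ε) / H) := by
  classical
  obtain ⟨ht0, ht1⟩ := ht
  obtain ⟨hγ0, hγ1⟩ := hγ
  have hVR : (1:ℝ) ≤ V := by exact_mod_cast hV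
  have hV0 : (0:ℝ) < V := by linarith
  haveI : Nonempty (Fin V) := ⟨⟨0, hV⟩⟩
  -- γ < 1/(2V)
  have hγV : γ < 1 / (2 * V) := by
    have h1 : (V : ℝ) * (2 * γ) < 1 := by
      rw [lt_div_iff₀ (by positivity : (0:ℝ) < 2 * γ)] at hVγ
      exact hVγ
    rw [lt_div_iff₀ (by positivity : (0:ℝ) < 2 * (V : ℝ))]
    nlinarith
  -- interval endpoints
  set aj : Fin V → ℝ := fun j => ((j : ℕ) : ℝ) / V with haj
  set bj : Fin V → ℝ := fun j => (((j : ℕ) : ℝ) + 1) / V with hbj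
  have hab : ∀ j : Fin V, aj j < bj j := by
    intro j
    rw [haj, hbj, div_lt_div_iff_of_pos_right hV0]
    linarith
  have hwidth : ∀ j : Fin V, bj j - aj j = 1 / V := fun j => by
    rw [haj, hbj]; ring
  have hsub : ∀ j : Fin V, Set.Icc (aj j) (bj j) ⊆ Set.Icc (0:ℝ) 1 := by
    intro j
    apply Set.Icc_subset_Icc
    · positivity
    · rw [hbj, div_le_one hV0]
      have : (j : ℕ) + 1 ≤ V := j.isLt
      exact_mod_cast this
  -- integrability of μ·e on subintervals
  have hμe_int : ∀ x (j : Fin V),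
      IntegrableOn (fun A => μ x A * e x A) (Set.Icc (aj j) (bj j)) := by
    intro x j
    have hm : Measurable fun A => μ x A * e x A :=
      (hμmeas.comp measurable_prodMk_left).mul (hemeas.comp measurable_prodMk_left)
    have h0 : IntegrableOn (fun A => μ x A * e x A) (Set.Icc (0:ℝ) 1) := by
      refine ((heint x).const_mul M).mono' hm.aestronglyMeasurable ?_
      filter_upwards [self_mem_ae_restrict measurableSet_Icc] with A hA
      rw [Real.norm_eq_abs, abs_mul,
        abs_of_nonneg (le_trans hη.le (he x A hA))]
      exact mul_le_mul_of_nonneg_right (hμbdd x A hA) (le_trans hη.le (he x A hA))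
    exact h0.mono_set (hsub j)
  -- weighted average bounds
  have hμI_le : ∀ x (j : Fin V) (hi : ℝ),
      (∀ A ∈ Set.Icc (aj j) (bj j), μ x A ≤ hi) → μI j x ≤ hi := by
    intro x j hi hhi
    rw [hμI]
    exact (wavg_bounds17 hη (hab j) (hμe_int x j) ((heint x).mono_set (hsub j))
      (fun A hA => he x A (hsub j hA))
      (fun A hA => (abs_le.1 (hμbdd x A (hsub j hA))).1) hhi).2
  have hμI_ge : ∀ x (j : Fin V) (lo : ℝ),
      (∀ A ∈ Set.Icc (aj j) (bj j), lo ≤ μ x A) → lo ≤ μI j x := by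
    intro x j lo hlo
    rw [hμI]
    exact (wavg_bounds17 hη (hab j) (hμe_int x j) ((heint x).mono_set (hsub j))
      (fun A hA => he x A (hsub j hA)) hlo
      (fun A hA => (abs_le.1 (hμbdd x A (hsub j hA))).2)).1
  -- softmax facts
  have hexp_sum_pos : ∀ x, 0 < ∑ k, Real.exp (μIt k x / H) :=
    fun x => Finset.sum_pos (fun k _ => Real.exp_pos _) Finset.univ_nonempty
  have hπnn : ∀ x (j : Fin V), 0 ≤ πt x j := by
    intro x j
    rw [hπt]
    exact div_nonneg (Real.exp_pos _).le (hexp_sum_pos x).le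
  have hπsum : ∀ x, ∑ j, πt x j = 1 := by
    intro x
    simp only [hπt]
    rw [← Finset.sum_div, div_self (hexp_sum_pos x).ne']
  have hπle : ∀ x (j k : Fin V), πt x j ≤ Real.exp ((μIt j x - μIt k x) / H) := by
    intro x j k
    rw [hπt]
    have h1 : Real.exp (μIt k x / H) ≤ ∑ l, Real.exp (μIt l x / H) :=
      Finset.single_le_sum (f := fun l => Real.exp (μIt l x / H))
        (fun l _ => (Real.exp_pos _).le) (Finset.mem_univ k)
    calc Real.exp (μIt j x / H) / ∑ l, Real.exp (μIt l x / H)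
        ≤ Real.exp (μIt j x / H) / Real.exp (μIt k x / H) :=
          div_le_div_of_nonneg_left (Real.exp_pos _).le (Real.exp_pos _) h1
      _ = Real.exp ((μIt j x - μIt k x) / H) := by
          rw [← Real.exp_sub, div_sub_div_same]
  -- covering
  have hcover : ∀ s ∈ Set.Icc (0:ℝ) 1, ∃ j : Fin V, s ∈ Set.Icc (aj j) (bj j) := by
    intro s hs
    obtain ⟨hs0, hs1⟩ := hs
    by_cases h1 : (1:ℝ) ≤ s
    · have hseq : s = 1 := le_antisymm hs1 h1
      refine ⟨⟨V - 1, by omega⟩, ?_, ?_⟩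
      · rw [haj, hseq, div_le_one hV0]
        push_cast [Nat.cast_sub hV]
        linarith
      · rw [hbj, le_div_iff₀ hV0, hseq]
        push_cast [Nat.cast_sub hV]
        linarith
    · push_neg at h1
      have hsV : s * V < V := by nlinarith
      have hflt : ⌊s * V⌋₊ < V := (Nat.floor_lt (by positivity)).2 hsV
      refine ⟨⟨⌊s * V⌋₊, hflt⟩, ?_, ?_⟩
      · rw [haj, div_le_iff₀ hV0]
        exact_mod_cast Nat.floor_le (by positivity : (0:ℝ) ≤ s * V)
      · rw [hbj, le_div_iff₀ hV0]
        have := Nat.lt_floor_add_one (s * V)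
        push_cast
        linarith
  -- midpoints
  set mj : Fin V → ℝ := fun j => (aj j + bj j) / 2 with hmj
  have hmid_mem : ∀ j : Fin V, mj j ∈ Set.Icc (aj j) (bj j) := by
    intro j
    have h1 := hab j
    have h2 : mj j = (aj j + bj j) / 2 := by rw [hmj]
    constructor
    · rw [h2]; linarith
    · rw [h2]; linarith
  have hmid_close : ∀ (j : Fin V), ∀ A ∈ Set.Icc (aj j) (bj j), |A - mj j| ≤ 1 / (2 * V) := by
    intro j A hA
    obtain ⟨h1, h2⟩ := hA
    have hw := hwidth j
    have h3 : mj j = (aj j + bj j) / 2 := by rw [hmj]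
    rw [h3, abs_le]
    constructor
    · rw [le_sub_iff_add_le]
      have h4 : 1 / (2 * (V:ℝ)) = (1 / V) / 2 := by ring
      rw [h4]
      linarith
    · rw [sub_le_iff_le_add]
      have h4 : 1 / (2 * (V:ℝ)) = (1 / V) / 2 := by ring
      rw [h4]
      linarith
  -- the function F
  set F : 𝒳 → ℝ := fun x => μ x (Astar x) - ∑ j, μI j x * πt x j with hF
  have hFeq : ∀ x, F x = ∑ j, (μ x (Astar x) - μI j x) * πt x j := by
    intro x
    rw [hF]
    simp only [sub_mul, Finset.sum_sub_distrib, ← Finset.mul_sum, hπsum x, mul_one]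
  have hμstar_le : ∀ x, μ x (Astar x) ≤ M := fun x => (abs_le.1 (hμbdd x _ (hAmem x))).2
  have hdnn : ∀ x (j : Fin V), 0 ≤ μ x (Astar x) - μI j x := fun x j =>
    sub_nonneg.2 (hμI_le x j _ (fun A hA => hAmax x A (hsub j hA)))
  have hd2M : ∀ x (j : Fin V), μ x (Astar x) - μI j x ≤ 2 * M := by
    intro x j
    have h1 : -M ≤ μI j x :=
      hμI_ge x j (-M) (fun A hA => (abs_le.1 (hμbdd x A (hsub j hA))).1)
    linarith [hμstar_le x]
  have hFabs : ∀ x, |F x| ≤ 2 * M := by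
    intro x
    rw [hFeq x, abs_le]
    constructor
    · have : (0:ℝ) ≤ ∑ j, (μ x (Astar x) - μI j x) * πt x j :=
        Finset.sum_nonneg (fun j _ => mul_nonneg (hdnn x j) (hπnn x j))
      linarith
    · calc ∑ j, (μ x (Astar x) - μI j x) * πt x j
          ≤ ∑ j, 2 * M * πt x j :=
            Finset.sum_le_sum (fun j _ => mul_le_mul_of_nonneg_right (hd2M x j) (hπnn x j))
        _ = 2 * M := by rw [← Finset.mul_sum, hπsum x, mul_one]
  -- abbreviations
  set Eexp : ℝ := Real.exp (-(M * t - 3 * M / V - 2 * ε) / H) with hEexp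
  have hEpos : 0 < Eexp := Real.exp_pos _
  set DD : ℝ := M / V + M * V ^ 2 * Eexp with hDD
  have hDD0 : 0 ≤ DD := by positivity
  -- bad set
  set B : Set 𝒳 := {x | ∃ A ∈ Set.Icc (0:ℝ) 1,
      γ ≤ |A - Astar x| ∧ μ x (Astar x) - μ x A ≤ M * t} with hB
  -- key pointwise bound on the good set
  have key : ∀ x, x ∉ B → F x ≤ DD := by
    intro x hx
    simp only [hB, Set.mem_setOf_eq, not_exists] at hx
    push_neg at hx
    obtain ⟨j₀, hj₀⟩ := hcover (Astar x) (hAmem x)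
    -- near bound
    have hnear : ∀ j : Fin V, (j = j₀ ∨ |mj j - Astar x| < γ) →
        μ x (Astar x) - μI j x ≤ M / V := by
      intro j hj
      have hAll : ∀ A ∈ Set.Icc (aj j) (bj j), |A - Astar x| ≤ 1 / V := by
        intro A hA
        rcases hj with rfl | hj
        · obtain ⟨h1, h2⟩ := hA
          obtain ⟨h3, h4⟩ := hj₀
          have hw := hwidth j
          rw [abs_le]
          constructor <;> linarith
        · calc |A - Astar x| ≤ |A - mj j| + |mj j - Astar x| := abs_sub_le _ _ _
            _ ≤ 1 / (2 * V) + γ := add_le_add (hmid_close j A hA) hj.le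
            _ ≤ 1 / V := by
                have h8 : 1 / (2 * (V:ℝ)) = (1 / V) / 2 := by ring
                linarith [hγV]
      have hge : μ x (Astar x) - M / V ≤ μI j x := by
        apply hμI_ge
        intro A hA
        have hl := hμlip x (Astar x) (hAmem x) A (hsub j hA)
        have h2 : μ x (Astar x) - μ x A ≤ M * |Astar x - A| := (abs_le.1 hl).2
        have h3 : |Astar x - A| ≤ 1 / V := by rw [abs_sub_comm]; exact hAll A hA
        have h4 : M * |Astar x - A| ≤ M * (1 / V) :=
          mul_le_mul_of_nonneg_left h3 hM.le
        have : M * (1 / V) = M / V := by ring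
        linarith
      linarith
    -- far bound
    have hfar : ∀ j : Fin V, γ ≤ |mj j - Astar x| →
        μI j x ≤ μ x (Astar x) - M * t + M / (2 * V) := by
      intro j hj
      have hmIcc : mj j ∈ Set.Icc (0:ℝ) 1 := hsub j (hmid_mem j)
      have h1 : M * t < μ x (Astar x) - μ x (mj j) := hx (mj j) hmIcc hj
      apply hμI_le
      intro A hA
      have hl := hμlip x A (hsub j hA) (mj j) hmIcc
      have h2 : μ x A - μ x (mj j) ≤ M * |A - mj j| := (abs_le.1 hl).2
      have h3 : M * |A - mj j| ≤ M * (1 / (2 * V)) :=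
        mul_le_mul_of_nonneg_left (hmid_close j A hA) hM.le
      have h4 : M * (1 / (2 * V)) = M / (2 * V) := by ring
      linarith
    -- softmax small on far indices
    have hπfar : ∀ j : Fin V, γ ≤ |mj j - Astar x| → πt x j ≤ Eexp := by
      intro j hj
      have h2 : μIt j x ≤ μ x (Astar x) - M * t + M / (2 * V) + ε := by
        have := (abs_le.1 (hμIt j x)).2
        linarith [hfar j hj]
      have h3 : μ x (Astar x) - M / V - ε ≤ μIt j₀ x := by
        have := (abs_le.1 (hμIt j₀ x)).1
        linarith [hnear j₀ (Or.inl rfl)]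
      refine (hπle x j j₀).trans ?_
      rw [hEexp, Real.exp_le_exp]
      have hMV : M / (2 * V) ≤ M / V := by
        rw [div_le_div_iff₀ (by positivity) hV0]
        nlinarith
      have h6 : 3 * M / V = 3 * (M / V) := by ring
      have h7 : (0:ℝ) ≤ M / V := by positivity
      have hnum : μIt j x - μIt j₀ x ≤ -(M * t - 3 * M / V - 2 * ε) := by
        linarith
      gcongr
    -- split the sum
    rw [hFeq x]
    set p : Fin V → Prop := fun j => j = j₀ ∨ |mj j - Astar x| < γ with hp
    have hsplit := Finset.sum_filter_add_sum_filter_not Finset.univ p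
      (fun j => (μ x (Astar x) - μI j x) * πt x j)
    rw [← hsplit]
    have hT : ∑ j ∈ Finset.univ.filter p, (μ x (Astar x) - μI j x) * πt x j ≤ M / V := by
      calc ∑ j ∈ Finset.univ.filter p, (μ x (Astar x) - μI j x) * πt x j
          ≤ ∑ j ∈ Finset.univ.filter p, M / V * πt x j :=
            Finset.sum_le_sum (fun j hj =>
              mul_le_mul_of_nonneg_right (hnear j (Finset.mem_filter.1 hj).2) (hπnn x j))
        _ ≤ ∑ j, M / V * πt x j :=
            Finset.sum_le_sum_of_subset_of_nonneg (Finset.filter_subset _ _)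
              (fun j _ _ => mul_nonneg (by positivity) (hπnn x j))
        _ = M / V := by rw [← Finset.mul_sum, hπsum x, mul_one]
    have hcard : ((Finset.univ.filter (fun j => ¬ p j)).card : ℝ) ≤ (V : ℝ) - 1 := by
      have h1 : j₀ ∈ Finset.univ.filter p :=
        Finset.mem_filter.2 ⟨Finset.mem_univ _, Or.inl rfl⟩
      have h2 : 1 ≤ (Finset.univ.filter p).card := Finset.card_pos.2 ⟨j₀, h1⟩
      have h3 := Finset.card_filter_add_card_filter_not
        (s := (Finset.univ : Finset (Fin V))) (p := p)
      have h4 : (Finset.univ : Finset (Fin V)).card = V := Finset.card_univ.trans (Fintype.card_fin V)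
      have h5 : (Finset.univ.filter (fun j => ¬ p j)).card ≤ V - 1 := by omega
      calc ((Finset.univ.filter (fun j => ¬ p j)).card : ℝ) ≤ ((V - 1 : ℕ) : ℝ) := by
            exact_mod_cast h5
        _ = (V : ℝ) - 1 := by push_cast [Nat.cast_sub hV]; ring
    have hTc : ∑ j ∈ Finset.univ.filter (fun j => ¬ p j),
        (μ x (Astar x) - μI j x) * πt x j ≤ M * V ^ 2 * Eexp := by
      have hterm : ∀ j ∈ Finset.univ.filter (fun j => ¬ p j),
          (μ x (Astar x) - μI j x) * πt x j ≤ 2 * M * Eexp := by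
        intro j hj
        have hj' := (Finset.mem_filter.1 hj).2
        simp only [hp] at hj'
        push_neg at hj'
        exact mul_le_mul (hd2M x j) (hπfar j hj'.2) (hπnn x j) (by positivity)
      calc ∑ j ∈ Finset.univ.filter (fun j => ¬ p j), (μ x (Astar x) - μI j x) * πt x j
          ≤ (Finset.univ.filter (fun j => ¬ p j)).card • (2 * M * Eexp) :=
            Finset.sum_le_card_nsmul _ _ _ hterm
        _ = ((Finset.univ.filter (fun j => ¬ p j)).card : ℝ) * (2 * M * Eexp) := by
            rw [nsmul_eq_mul]
        _ ≤ ((V : ℝ) - 1) * (2 * M * Eexp) :=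
            mul_le_mul_of_nonneg_right hcard (by positivity)
        _ ≤ M * V ^ 2 * Eexp := by
            nlinarith [mul_nonneg (mul_nonneg hM.le hEpos.le) (sq_nonneg ((V:ℝ) - 1)),
              mul_pos hM hEpos]
    rw [hDD]
    exact add_le_add hT hTc
  -- measurability of F
  have hμImeas : ∀ j : Fin V, Measurable (μI j) := by
    intro j
    have h1 : StronglyMeasurable fun x => ∫ A in Set.Icc (aj j) (bj j), μ x A * e x A :=
      StronglyMeasurable.integral_prod_right'
        (f := fun p : 𝒳 × ℝ => μ p.1 p.2 * e p.1 p.2)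
        ((hμmeas.mul hemeas).stronglyMeasurable)
    have h2 : StronglyMeasurable fun x => ∫ A in Set.Icc (aj j) (bj j), e x A :=
      StronglyMeasurable.integral_prod_right'
        (f := fun p : 𝒳 × ℝ => e p.1 p.2) (hemeas.stronglyMeasurable)
    have h3 : μI j = fun x =>
        (∫ A in Set.Icc (aj j) (bj j), μ x A * e x A) /
        (∫ A in Set.Icc (aj j) (bj j), e x A) := funext fun x => hμI j x
    rw [h3]
    exact h1.measurable.div h2.measurable
  have hπmeas : ∀ j : Fin V, Measurable fun x => πt x j := by
    intro j
    simp only [hπt]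
    exact (((hμItmeas j).div_const H).exp).div
      (Finset.measurable_sum _ fun k _ => ((hμItmeas k).div_const H).exp)
  have hFmeas : Measurable F := by
    rw [hF]
    exact (hμmeas.comp (measurable_id.prodMk hAmeas)).sub
      (Finset.measurable_sum _ fun j _ => (hμImeas j).mul (hπmeas j))
  -- integral bound
  set B' := toMeasurable P B with hB'
  have hB'meas : MeasurableSet B' := measurableSet_toMeasurable P B
  have hle : ∀ x, F x ≤ B'.indicator (fun _ => 2 * M) x + DD := by
    intro x
    by_cases hx : x ∈ B'
    · rw [Set.indicator_of_mem hx]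
      have := (abs_le.1 (hFabs x)).2
      linarith
    · rw [Set.indicator_of_notMem hx, zero_add]
      exact key x (fun hxB => hx (subset_toMeasurable P B hxB))
  have hFint : Integrable F P :=
    Integrable.mono' (integrable_const (2 * M)) hFmeas.aestronglyMeasurable
      (Filter.Eventually.of_forall fun x => by
        simpa [Real.norm_eq_abs] using hFabs x)
  have hGind : Integrable (B'.indicator (fun _ => 2 * M)) P :=
    (integrable_const (2 * M)).indicator hB'meas
  have hGint : Integrable (fun x => B'.indicator (fun _ => 2 * M) x + DD) P :=
    hGind.add (integrable_const DD)
  have hIle := integral_mono hFint hGint hle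
  have hIG : ∫ x, (B'.indicator (fun _ => 2 * M) x + DD) ∂P
      = (P B').toReal * (2 * M) + DD := by
    rw [integral_add hGind (integrable_const DD), integral_indicator_const _ hB'meas,
      integral_const]
    simp [measure_univ, measureReal_def]
  have hPB : (P B).toReal ≤ c * t ^ q * (1 - γ) := by
    refine ENNReal.toReal_le_of_le_ofReal ?_ hnoise
    have h1 : (0:ℝ) < t ^ q := Real.rpow_pos_of_pos ht0 q
    exact mul_nonneg (mul_pos hc h1).le (by linarith)
  have hPB' : (P B').toReal = (P B).toReal := by rw [hB', measure_toMeasurable]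
  have hfinal : ∫ x, F x ∂P ≤ c * t ^ q * (1 - γ) * (2 * M) + DD := by
    rw [hIG, hPB'] at hIle
    have h2 : (P B).toReal * (2 * M) ≤ c * t ^ q * (1 - γ) * (2 * M) :=
      mul_le_mul_of_nonneg_right hPB (by positivity)
    linarith
  have heq : c * t ^ q * (1 - γ) * (2 * M) + DD
      = M / V + 2 * c * M * t ^ q * (1 - γ) + M * V ^ 2 * Eexp := by
    rw [hDD]; ring
  exact hfinal.trans_eq heq
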